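/- Fix λ > 0 and σ > 0. For each P ≥ 1 let μ0^{(P)} ∈ ℝ^P be arbitrary and let Y^{(P)} have independent coordinates Y_i ~ N((μ0^{(P)})_i, σ²). Let ε : ℕ → (0,∞) satisfy ε(P) → 0 and P·ε(P) → ∞ as P → ∞. Define h(t) = 1 if t ≤ −λ, 0 if −λ < t < λ, −1 if t ≥ λ; ST(t,λ) = t+λ if t ≤ −λ, 0 if −λ<t<λ, t−λ if t ≥ λ; SUGAR_P(y) = 2 Σ_{i=1}^P h(y_i)(ST(y_i,λ) − y_i) + (2σ²/ε(P)) Σ_{i=1}^P (h(y_i + ε(P)) − h(y_i)); and R'_P = 2λ Σ_{i=1}^P P(|Y_i| > λ) − σ√(2/π) Σ_{i=1}^P [ exp(−((μ0^{(P)})_i + λ)²/(2σ²)) + exp(−((μ0^{(P)})_i − λ)²/(2σ²)) ]. Then for every η > 0, lim_{P→∞} P( | (1/P)(SUGAR_P(Y^{(P)}) − R'_P) | ≥ η ) = 0. -/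

import Mathlib

open MeasureTheory ProbabilityTheory Filter
open scoped BigOperators Topology
open Set Real

noncomputable section

/-- Soft-thresholding with threshold `λ`. -/
def softThresh (t lam : ℝ) : ℝ :=
  if t ≤ -lam then t + lam else if t < lam then 0 else t - lam

/-- The λ-derivative of soft-thresholding away from `|t| = λ`. -/
def hST (lam t : ℝ) : ℝ := if t ≤ -lam then 1 else if t < lam then 0 else -1

instance gaussSq_isProb (m σ : ℝ) : IsProbabilityMeasure (gaussianReal m ⟨σ ^ 2, sq_nonneg σ⟩) :=
  instIsProbabilityMeasureGaussianReal m _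


lemma measurable_hST (lam : ℝ) : Measurable (hST lam) := by
  unfold hST
  exact Measurable.ite (measurableSet_le measurable_id measurable_const) measurable_const
    (Measurable.ite (measurableSet_lt measurable_id measurable_const) measurable_const
      measurable_const)

lemma first_part_eq (lam : ℝ) (hlam : 0 < lam) (y : ℝ) :
    2 * hST lam y * (softThresh y lam - y)
      = Set.indicator ({t : ℝ | t ≤ -lam} ∪ {t : ℝ | lam ≤ t}) (fun _ => 2 * lam) y := by
  simp only [hST, softThresh, Set.indicator_apply, Set.mem_union, Set.mem_setOf_eq]
  split_ifs <;> (try push_neg at *) <;> casesm* _ ∨ _, _ ∧ _ <;> linarith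

lemma delta_part_eq (lam e : ℝ) (hlam : 0 < lam) (he : 0 < e) (helam : e < lam) (y : ℝ) :
    hST lam (y + e) - hST lam y
      = - Set.indicator (Set.Ioc (-lam - e) (-lam) ∪ Set.Ico (lam - e) lam)
          (fun _ => (1:ℝ)) y := by
  simp only [hST, Set.indicator_apply, Set.mem_union, Set.mem_Ioc, Set.mem_Ico]
  split_ifs <;> (try push_neg at *) <;> casesm* _ ∨ _, _ ∧ _ <;>
    first
    | linarith
    | (rename_i hl hr; exfalso; first
        | exact absurd (hl (by linarith)) (by linarith)
        | exact absurd (hr (by linarith)) (by linarith))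

variable {σ : ℝ}

lemma gauss_abs_mul_exp_le (hσ : 0 < σ) (u : ℝ) :
    |u| * Real.exp (-u ^ 2 / (2 * σ ^ 2)) ≤ σ := by
  have key : |u| ≤ σ * Real.exp (u ^ 2 / (2 * σ ^ 2)) := by
    have h2 : (2 : ℝ) * σ ^ 2 > 0 := by positivity
    have hxx : (2 * σ ^ 2) * (u ^ 2 / (2 * σ ^ 2)) = u ^ 2 := by field_simp
    nlinarith [Real.add_one_le_exp (u ^ 2 / (2 * σ ^ 2)), sq_nonneg (|u| - σ), sq_abs u,
      abs_nonneg u, Real.exp_pos (u ^ 2 / (2 * σ ^ 2)),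
      mul_pos hσ (Real.exp_pos (u ^ 2 / (2 * σ ^ 2)))]
  calc |u| * Real.exp (-u ^ 2 / (2 * σ ^ 2))
      ≤ (σ * Real.exp (u ^ 2 / (2 * σ ^ 2))) * Real.exp (-u ^ 2 / (2 * σ ^ 2)) :=
        mul_le_mul_of_nonneg_right key (Real.exp_pos _).le
    _ = σ := by
        rw [mul_assoc, ← Real.exp_add]
        rw [show u ^ 2 / (2 * σ ^ 2) + -u ^ 2 / (2 * σ ^ 2) = 0 by ring]
        rw [Real.exp_zero, mul_one]

lemma gauss_exp_lip (hσ : 0 < σ) (u w : ℝ) :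
    |Real.exp (-u ^ 2 / (2 * σ ^ 2)) - Real.exp (-w ^ 2 / (2 * σ ^ 2))| ≤ σ⁻¹ * |u - w| := by
  have h := Convex.norm_image_sub_le_of_norm_hasDerivWithin_le
      (f := fun t : ℝ => Real.exp (-t ^ 2 / (2 * σ ^ 2)))
      (f' := fun t : ℝ => Real.exp (-t ^ 2 / (2 * σ ^ 2)) * (-(2 * t) / (2 * σ ^ 2)))
      (s := Set.univ) (C := σ⁻¹) ?_ ?_ convex_univ (Set.mem_univ w) (Set.mem_univ u)
  · simpa [Real.norm_eq_abs] using h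
  · intro x _
    have h1 : HasDerivAt (fun t : ℝ => -t ^ 2 / (2 * σ ^ 2)) (-(2 * x) / (2 * σ ^ 2)) x := by
      simpa using ((hasDerivAt_pow 2 x).neg.div_const (2 * σ ^ 2))
    exact h1.exp.hasDerivWithinAt
  · intro x _
    rw [Real.norm_eq_abs, abs_mul, abs_div, abs_neg]
    rw [abs_of_pos (show (0:ℝ) < 2 * σ ^ 2 by positivity), abs_mul, abs_two]
    rw [abs_of_pos (Real.exp_pos _)]
    have hb := gauss_abs_mul_exp_le hσ x
    rw [mul_div_assoc', div_le_iff₀ (by positivity : (0:ℝ) < 2 * σ ^ 2)]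
    calc Real.exp (-x ^ 2 / (2 * σ ^ 2)) * (2 * |x|)
        = 2 * (|x| * Real.exp (-x ^ 2 / (2 * σ ^ 2))) := by ring
      _ ≤ 2 * σ := by linarith
      _ ≤ σ⁻¹ * (2 * σ ^ 2) := by
          rw [show σ⁻¹ * (2 * σ ^ 2) = 2 * (σ⁻¹ * σ ^ 2) by ring]
          rw [show σ⁻¹ * σ ^ 2 = σ by field_simp [pow_two]]

lemma gauss_pdf_le (hσ : 0 < σ) (m x : ℝ) :
    gaussianPDFReal m ⟨σ ^ 2, sq_nonneg σ⟩ x ≤ σ⁻¹ := by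
  unfold gaussianPDFReal
  erw [NNReal.coe_mk]
  have hsqrt : Real.sqrt (2 * π * σ ^ 2) = Real.sqrt (2 * π) * σ := by
    rw [Real.sqrt_mul (by positivity), Real.sqrt_sq hσ.le]
  have h1 : Real.exp (-(x - m) ^ 2 / (2 * σ ^ 2)) ≤ 1 := by
    rw [Real.exp_le_one_iff]
    apply div_nonpos_of_nonpos_of_nonneg
    · exact neg_nonpos.mpr (sq_nonneg _)
    · positivity
  have h2 : (Real.sqrt (2 * π * σ ^ 2))⁻¹ ≤ σ⁻¹ := by
    rw [hsqrt]
    apply inv_anti₀ hσ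
    nlinarith [Real.one_le_sqrt.mpr (by nlinarith [Real.pi_gt_three] : (1:ℝ) ≤ 2 * π), hσ.le,
      Real.sqrt_nonneg (2 * π)]
  calc (Real.sqrt (2 * π * σ ^ 2))⁻¹ * Real.exp (-(x - m) ^ 2 / (2 * σ ^ 2))
      ≤ (Real.sqrt (2 * π * σ ^ 2))⁻¹ * 1 := by
        apply mul_le_mul_of_nonneg_left h1 (by positivity)
    _ = (Real.sqrt (2 * π * σ ^ 2))⁻¹ := mul_one _
    _ ≤ σ⁻¹ := h2

lemma gauss_pdf_lip (hσ : 0 < σ) (m x y : ℝ) :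
    |gaussianPDFReal m ⟨σ ^ 2, sq_nonneg σ⟩ x - gaussianPDFReal m ⟨σ ^ 2, sq_nonneg σ⟩ y|
      ≤ (σ ^ 2)⁻¹ * |x - y| := by
  unfold gaussianPDFReal
  erw [NNReal.coe_mk]
  rw [← mul_sub, abs_mul]
  have hlip := gauss_exp_lip hσ (x - m) (y - m)
  have h2 : |(Real.sqrt (2 * π * σ ^ 2))⁻¹| ≤ σ⁻¹ := by
    rw [abs_of_pos (by positivity)]
    rw [Real.sqrt_mul (by positivity), Real.sqrt_sq hσ.le]
    apply inv_anti₀ hσ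
    nlinarith [Real.one_le_sqrt.mpr (by nlinarith [Real.pi_gt_three] : (1:ℝ) ≤ 2 * π), hσ.le,
      Real.sqrt_nonneg (2 * π)]
  have h3 : |x - m - (y - m)| = |x - y| := by rw [show x - m - (y - m) = x - y by ring]
  calc |(Real.sqrt (2 * π * σ ^ 2))⁻¹| *
        |Real.exp (-(x - m) ^ 2 / (2 * σ ^ 2)) - Real.exp (-(y - m) ^ 2 / (2 * σ ^ 2))|
      ≤ σ⁻¹ * (σ⁻¹ * |x - y|) := by
        apply mul_le_mul h2 (by rw [← h3]; exact hlip) (abs_nonneg _) (by positivity)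
    _ = (σ ^ 2)⁻¹ * |x - y| := by rw [pow_two, mul_inv]; ring

lemma gaussV_ne_zero (hσ : 0 < σ) : (⟨σ ^ 2, sq_nonneg σ⟩ : NNReal) ≠ 0 := by
  intro h
  exact (pow_ne_zero 2 hσ.ne') (congrArg NNReal.toReal h)

lemma gauss_noAtoms (hσ : 0 < σ) (m : ℝ) : NoAtoms (gaussianReal m ⟨σ ^ 2, sq_nonneg σ⟩) :=
  ⟨fun x => (gaussianReal_absolutelyContinuous m (gaussV_ne_zero hσ)) (measure_singleton x)⟩

lemma gauss_toReal (hσ : 0 < σ) (m : ℝ) {s : Set ℝ} (hs : MeasurableSet s) :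
    ((gaussianReal m ⟨σ ^ 2, sq_nonneg σ⟩) s).toReal
      = ∫ x in s, gaussianPDFReal m ⟨σ ^ 2, sq_nonneg σ⟩ x := by
  rw [gaussianReal_apply_eq_integral m (gaussV_ne_zero hσ) s, ENNReal.toReal_ofReal]
  exact setIntegral_nonneg hs (fun x _ => gaussianPDFReal_nonneg _ _ _)

lemma gauss_Ioc_le (hσ : 0 < σ) (m a : ℝ) {e : ℝ} (he : 0 ≤ e) :
    ((gaussianReal m ⟨σ ^ 2, sq_nonneg σ⟩) (Set.Ioc (a - e) a)).toReal ≤ e * σ⁻¹ := by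
  rw [gauss_toReal hσ m measurableSet_Ioc]
  have h := norm_setIntegral_le_of_norm_le_const (f := gaussianPDFReal m ⟨σ ^ 2, sq_nonneg σ⟩)
    (μ := volume) (C := σ⁻¹) (s := Set.Ioc (a - e) a) measure_Ioc_lt_top
    (fun x _ => by
      erw [Real.norm_eq_abs, abs_of_nonneg (gaussianPDFReal_nonneg _ _ _)]
      exact gauss_pdf_le hσ m x)
  have hv : (volume (Set.Ioc (a - e) a)).toReal = e := by
    rw [Real.volume_Ioc, ENNReal.toReal_ofReal (by linarith)]
    ring
  calc ∫ x in Set.Ioc (a - e) a, gaussianPDFReal m ⟨σ ^ 2, sq_nonneg σ⟩ x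
      ≤ ‖∫ x in Set.Ioc (a - e) a, gaussianPDFReal m ⟨σ ^ 2, sq_nonneg σ⟩ x‖ := le_abs_self _
    _ ≤ σ⁻¹ * (volume (Set.Ioc (a - e) a)).toReal := h
    _ = e * σ⁻¹ := by rw [hv]; ring

lemma gauss_Ioc_approx (hσ : 0 < σ) (m a : ℝ) {e : ℝ} (he : 0 ≤ e) :
    |((gaussianReal m ⟨σ ^ 2, sq_nonneg σ⟩) (Set.Ioc (a - e) a)).toReal
        - e * gaussianPDFReal m ⟨σ ^ 2, sq_nonneg σ⟩ a| ≤ (σ ^ 2)⁻¹ * e ^ 2 := by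
  rw [gauss_toReal hσ m measurableSet_Ioc]
  have hv : (volume (Set.Ioc (a - e) a)).toReal = e := by
    rw [Real.volume_Ioc, ENNReal.toReal_ofReal (by linarith)]
    ring
  have hconst : e * gaussianPDFReal m ⟨σ ^ 2, sq_nonneg σ⟩ a
      = ∫ _ in Set.Ioc (a - e) a, gaussianPDFReal m ⟨σ ^ 2, sq_nonneg σ⟩ a := by
    rw [setIntegral_const, measureReal_def, hv, smul_eq_mul]
  erw [hconst, ← integral_sub ((integrable_gaussianPDFReal m _).integrableOn)
      (integrableOn_const measure_Ioc_lt_top.ne)]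
  have h := norm_setIntegral_le_of_norm_le_const
    (f := fun x => gaussianPDFReal m ⟨σ ^ 2, sq_nonneg σ⟩ x
        - gaussianPDFReal m ⟨σ ^ 2, sq_nonneg σ⟩ a)
    (μ := volume) (C := (σ ^ 2)⁻¹ * e) (s := Set.Ioc (a - e) a)
    measure_Ioc_lt_top
    (fun x hx => by
      rw [Real.norm_eq_abs]
      refine le_trans (gauss_pdf_lip hσ m x a) ?_
      have h1 : |x - a| ≤ e := by
        rw [Set.mem_Ioc] at hx
        rw [abs_le]; constructor <;> linarith [hx.1, hx.2]
      exact mul_le_mul_of_nonneg_left h1 (by positivity))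
  rw [measureReal_def, hv] at h
  calc |∫ x in Set.Ioc (a - e) a, (gaussianPDFReal m ⟨σ ^ 2, sq_nonneg σ⟩ x
          - gaussianPDFReal m ⟨σ ^ 2, sq_nonneg σ⟩ a)|
      ≤ (σ ^ 2)⁻¹ * e * e := h
    _ = (σ ^ 2)⁻¹ * e ^ 2 := by ring

variable {σ lam : ℝ}

/-- The per-coordinate SUGAR integrand. -/
def Gfun (lam σ e y : ℝ) : ℝ :=
  2 * hST lam y * (softThresh y lam - y) + 2 * σ ^ 2 / e * (hST lam (y + e) - hST lam y)

/-- The union of the two small intervals where the finite difference of `hST` is nonzero. -/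
def Iset (lam e : ℝ) : Set ℝ := Set.Ioc (-lam - e) (-lam) ∪ Set.Ico (lam - e) lam

/-- The per-coordinate risk derivative. -/
def rFun (lam σ m : ℝ) : ℝ :=
  2 * lam * ((gaussianReal m ⟨σ ^ 2, sq_nonneg σ⟩) {t : ℝ | lam < |t|}).toReal
    - σ * Real.sqrt (2 / π) * (Real.exp (-(m + lam) ^ 2 / (2 * σ ^ 2))
        + Real.exp (-(m - lam) ^ 2 / (2 * σ ^ 2)))

lemma measurableSet_Aset (lam : ℝ) :
    MeasurableSet ({t : ℝ | t ≤ -lam} ∪ {t : ℝ | lam ≤ t}) :=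
  (measurableSet_Iic (a := -lam)).union (measurableSet_Ici (a := lam))

lemma measurableSet_Iset (lam e : ℝ) : MeasurableSet (Iset lam e) :=
  measurableSet_Ioc.union measurableSet_Ico

lemma Gfun_eq (hlam : 0 < lam) {e : ℝ} (he : 0 < e) (helam : e < lam) (y : ℝ) :
    Gfun lam σ e y
      = Set.indicator ({t : ℝ | t ≤ -lam} ∪ {t : ℝ | lam ≤ t}) (fun _ => 2 * lam) y
        - 2 * σ ^ 2 / e * Set.indicator (Iset lam e) (fun _ => (1 : ℝ)) y := by
  rw [Gfun, first_part_eq lam hlam, delta_part_eq lam e hlam he helam, Iset]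
  ring

lemma measurable_Gfun (hlam : 0 < lam) {e : ℝ} (he : 0 < e) (helam : e < lam) :
    Measurable (Gfun lam σ e) := by
  have : Gfun lam σ e = fun y =>
      Set.indicator ({t : ℝ | t ≤ -lam} ∪ {t : ℝ | lam ≤ t}) (fun _ => 2 * lam) y
        - 2 * σ ^ 2 / e * Set.indicator (Iset lam e) (fun _ => (1 : ℝ)) y :=
    funext (Gfun_eq hlam he helam)
  rw [this]
  exact ((measurable_const.indicator (measurableSet_Aset lam)).sub
    (measurable_const.mul (measurable_const.indicator (measurableSet_Iset lam e))))

lemma abs_Gfun_le (hσ : 0 < σ) (hlam : 0 < lam) {e : ℝ} (he : 0 < e) (helam : e < lam) (y : ℝ) :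
    |Gfun lam σ e y| ≤ 2 * lam + 2 * σ ^ 2 / e := by
  rw [Gfun_eq hlam he helam]
  have h1 : |Set.indicator ({t : ℝ | t ≤ -lam} ∪ {t : ℝ | lam ≤ t}) (fun _ => 2 * lam) y|
      ≤ 2 * lam := by
    by_cases hy : y ∈ ({t : ℝ | t ≤ -lam} ∪ {t : ℝ | lam ≤ t})
    · rw [Set.indicator_of_mem hy]; rw [abs_of_pos (by linarith)]
    · rw [Set.indicator_of_notMem hy]; simp; linarith
  have h2 : |2 * σ ^ 2 / e * Set.indicator (Iset lam e) (fun _ => (1 : ℝ)) y|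
      ≤ 2 * σ ^ 2 / e := by
    by_cases hy : y ∈ Iset lam e
    · rw [Set.indicator_of_mem hy]; rw [mul_one, abs_of_pos (by positivity)]
    · rw [Set.indicator_of_notMem hy]; simp; positivity
  calc |_ - _| ≤ _ + _ := abs_sub _ _
    _ ≤ 2 * lam + 2 * σ ^ 2 / e := add_le_add h1 h2

lemma gauss_A_eq (hσ : 0 < σ) (hlam : 0 < lam) (m : ℝ) :
    (gaussianReal m ⟨σ ^ 2, sq_nonneg σ⟩) ({t : ℝ | t ≤ -lam} ∪ {t : ℝ | lam ≤ t})
      = (gaussianReal m ⟨σ ^ 2, sq_nonneg σ⟩) {t : ℝ | lam < |t|} := by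
  haveI : NullSingletonClass (gaussianReal m ⟨σ ^ 2, sq_nonneg σ⟩) := gauss_noAtoms hσ m
  have hset : {t : ℝ | lam < |t|} = Set.Iio (-lam) ∪ Set.Ioi lam := by
    ext t
    simp only [Set.mem_setOf_eq, Set.mem_union, Set.mem_Iio, Set.mem_Ioi, lt_abs, lt_neg]
    tauto
  have hset2 : ({t : ℝ | t ≤ -lam} ∪ {t : ℝ | lam ≤ t}) = Set.Iic (-lam) ∪ Set.Ici lam := rfl
  rw [hset, hset2]
  exact (measure_congr ((Iio_ae_eq_Iic (a := -lam)).union (Ioi_ae_eq_Ici (a := lam)))).symm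

lemma gauss_Iset_eq (hσ : 0 < σ) (hlam : 0 < lam) {e : ℝ} (he : 0 < e) (helam : e < lam) (m : ℝ) :
    ((gaussianReal m ⟨σ ^ 2, sq_nonneg σ⟩) (Iset lam e)).toReal
      = ((gaussianReal m ⟨σ ^ 2, sq_nonneg σ⟩) (Set.Ioc (-lam - e) (-lam))).toReal
        + ((gaussianReal m ⟨σ ^ 2, sq_nonneg σ⟩) (Set.Ioc (lam - e) lam)).toReal := by
  haveI : NullSingletonClass (gaussianReal m ⟨σ ^ 2, sq_nonneg σ⟩) := gauss_noAtoms hσ m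
  have hdisj : Disjoint (Set.Ioc (-lam - e) (-lam)) (Set.Ico (lam - e) lam) := by
    apply Set.disjoint_left.mpr
    intro x hx hx'
    rw [Set.mem_Ioc] at hx; rw [Set.mem_Ico] at hx'
    linarith [hx.2, hx'.1]
  rw [Iset, measure_union hdisj measurableSet_Ico,
    measure_congr (Ico_ae_eq_Ioc (a := lam - e) (b := lam)),
    ENNReal.toReal_add (measure_ne_top _ _) (measure_ne_top _ _)]

lemma integral_Gfun (hσ : 0 < σ) (hlam : 0 < lam) {e : ℝ} (he : 0 < e) (helam : e < lam) (m : ℝ) :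
    ∫ y, Gfun lam σ e y ∂(gaussianReal m ⟨σ ^ 2, sq_nonneg σ⟩)
      = 2 * lam * ((gaussianReal m ⟨σ ^ 2, sq_nonneg σ⟩) {t : ℝ | lam < |t|}).toReal
        - 2 * σ ^ 2 / e *
          (((gaussianReal m ⟨σ ^ 2, sq_nonneg σ⟩) (Set.Ioc (-lam - e) (-lam))).toReal
            + ((gaussianReal m ⟨σ ^ 2, sq_nonneg σ⟩) (Set.Ioc (lam - e) lam)).toReal) := by
  simp_rw [Gfun_eq hlam he helam]
  rw [integral_sub, integral_const_mul, integral_indicator_const _ (measurableSet_Aset lam),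
    integral_indicator_const _ (measurableSet_Iset lam e), measureReal_def, measureReal_def,
    gauss_A_eq hσ hlam m,
    gauss_Iset_eq hσ hlam he helam m]
  · simp only [smul_eq_mul, mul_one]
    ring
  · exact (integrable_const (2 * lam)).indicator (measurableSet_Aset lam)
  · exact (((integrable_const (1 : ℝ)).indicator (measurableSet_Iset lam e)).const_mul _)

lemma sqrt_const_eq (hσ : 0 < σ) :
    σ * Real.sqrt (2 / π) = 2 * σ ^ 2 * (Real.sqrt (2 * π * σ ^ 2))⁻¹ := by
  have hs2 : Real.sqrt 2 * Real.sqrt 2 = 2 := Real.mul_self_sqrt (by norm_num)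
  have hπ : 0 < Real.sqrt π := Real.sqrt_pos.mpr Real.pi_pos
  have h2 : (0:ℝ) < Real.sqrt 2 := Real.sqrt_pos.mpr (by norm_num)
  rw [Real.sqrt_mul (by positivity : (0:ℝ) ≤ 2 * π), Real.sqrt_sq hσ.le,
    Real.sqrt_mul (by norm_num : (0:ℝ) ≤ 2) π,
    Real.sqrt_div (by norm_num : (0:ℝ) ≤ 2) π]
  field_simp
  linear_combination hs2

lemma bias_bound (hσ : 0 < σ) (hlam : 0 < lam) {e : ℝ} (he : 0 < e) (helam : e < lam) (m : ℝ) :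
    |∫ y, Gfun lam σ e y ∂(gaussianReal m ⟨σ ^ 2, sq_nonneg σ⟩) - rFun lam σ m| ≤ 4 * e := by
  rw [integral_Gfun hσ hlam he helam m, rFun]
  set T1 := ((gaussianReal m ⟨σ ^ 2, sq_nonneg σ⟩) (Set.Ioc (-lam - e) (-lam))).toReal with hT1
  set T2 := ((gaussianReal m ⟨σ ^ 2, sq_nonneg σ⟩) (Set.Ioc (lam - e) lam)).toReal with hT2
  set p1 := gaussianPDFReal m ⟨σ ^ 2, sq_nonneg σ⟩ (-lam) with hp1
  set p2 := gaussianPDFReal m ⟨σ ^ 2, sq_nonneg σ⟩ lam with hp2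
  have hexp : σ * Real.sqrt (2 / π) * (Real.exp (-(m + lam) ^ 2 / (2 * σ ^ 2))
      + Real.exp (-(m - lam) ^ 2 / (2 * σ ^ 2))) = 2 * σ ^ 2 * (p1 + p2) := by
    rw [sqrt_const_eq hσ, hp1, hp2]
    unfold gaussianPDFReal
    erw [NNReal.coe_mk]
    rw [show (-lam - m : ℝ) ^ 2 = (m + lam) ^ 2 by ring,
      show (lam - m : ℝ) ^ 2 = (m - lam) ^ 2 by ring]
    ring
  have key : 2 * lam * ((gaussianReal m ⟨σ ^ 2, sq_nonneg σ⟩) {t : ℝ | lam < |t|}).toReal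
        - 2 * σ ^ 2 / e * (T1 + T2)
        - (2 * lam * ((gaussianReal m ⟨σ ^ 2, sq_nonneg σ⟩) {t : ℝ | lam < |t|}).toReal
          - σ * Real.sqrt (2 / π) * (Real.exp (-(m + lam) ^ 2 / (2 * σ ^ 2))
              + Real.exp (-(m - lam) ^ 2 / (2 * σ ^ 2))))
      = -(2 * σ ^ 2 / e) * ((T1 - e * p1) + (T2 - e * p2)) := by
    rw [hexp]
    field_simp
    ring
  rw [key]
  have hb1 : |T1 - e * p1| ≤ (σ ^ 2)⁻¹ * e ^ 2 := by
    have := gauss_Ioc_approx hσ m (-lam) he.le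
    rw [show (-lam - e : ℝ) = -lam - e by ring] at this
    exact this
  have hb2 : |T2 - e * p2| ≤ (σ ^ 2)⁻¹ * e ^ 2 := gauss_Ioc_approx hσ m lam he.le
  have harith : (2 * σ ^ 2 / e) * ((σ ^ 2)⁻¹ * e ^ 2 + (σ ^ 2)⁻¹ * e ^ 2) = 4 * e := by
    field_simp
    ring
  calc |(-(2 * σ ^ 2 / e)) * ((T1 - e * p1) + (T2 - e * p2))|
      = (2 * σ ^ 2 / e) * |(T1 - e * p1) + (T2 - e * p2)| := by
        rw [abs_mul, abs_neg, abs_of_pos (by positivity)]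
    _ ≤ (2 * σ ^ 2 / e) * ((σ ^ 2)⁻¹ * e ^ 2 + (σ ^ 2)⁻¹ * e ^ 2) := by
        apply mul_le_mul_of_nonneg_left _ (by positivity)
        exact le_trans (abs_add_le _ _) (add_le_add hb1 hb2)
    _ = 4 * e := harith

lemma sq_integral_Gfun_le (hσ : 0 < σ) (hlam : 0 < lam) {e : ℝ} (he : 0 < e)
    (helam : e < lam) (m : ℝ) :
    ∫ y, (Gfun lam σ e y) ^ 2 ∂(gaussianReal m ⟨σ ^ 2, sq_nonneg σ⟩)
      ≤ 8 * lam ^ 2 + 16 * σ ^ 3 / e := by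
  set ν := gaussianReal m ⟨σ ^ 2, sq_nonneg σ⟩ with hν
  have hpt : ∀ y, (Gfun lam σ e y) ^ 2
      ≤ 8 * lam ^ 2 + 2 * (2 * σ ^ 2 / e) ^ 2
          * Set.indicator (Iset lam e) (fun _ => (1 : ℝ)) y := by
    intro y
    rw [Gfun_eq hlam he helam y]
    by_cases hA : y ∈ ({t : ℝ | t ≤ -lam} ∪ {t : ℝ | lam ≤ t}) <;>
      by_cases hI : y ∈ Iset lam e
    · rw [Set.indicator_of_mem hA, Set.indicator_of_mem hI]
      nlinarith [sq_nonneg (2 * lam + 2 * σ ^ 2 / e), sq_nonneg lam, sq_nonneg (2 * σ ^ 2 / e)]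
    · rw [Set.indicator_of_mem hA, Set.indicator_of_notMem hI]
      nlinarith [sq_nonneg lam, sq_nonneg (2 * σ ^ 2 / e)]
    · rw [Set.indicator_of_notMem hA, Set.indicator_of_mem hI]
      nlinarith [sq_nonneg lam, sq_nonneg (2 * σ ^ 2 / e)]
    · rw [Set.indicator_of_notMem hA, Set.indicator_of_notMem hI]
      nlinarith [sq_nonneg lam, sq_nonneg (2 * σ ^ 2 / e)]
  have hGi : Integrable (fun y => (Gfun lam σ e y) ^ 2) ν := by
    refine (integrable_const ((2 * lam + 2 * σ ^ 2 / e) ^ 2)).mono'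
      (((measurable_Gfun hlam he helam).pow_const 2).aestronglyMeasurable) ?_
    refine ae_of_all _ (fun y => ?_)
    rw [Real.norm_eq_abs, abs_pow]
    exact pow_le_pow_left₀ (abs_nonneg _) (abs_Gfun_le hσ hlam he helam y) 2
  have hRi : Integrable (fun y => 8 * lam ^ 2 + 2 * (2 * σ ^ 2 / e) ^ 2
      * Set.indicator (Iset lam e) (fun _ => (1 : ℝ)) y) ν :=
    (integrable_const _).add
      (((integrable_const (1 : ℝ)).indicator (measurableSet_Iset lam e)).const_mul _)
  have hmono := integral_mono hGi hRi hpt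
  have hR : ∫ y, (8 * lam ^ 2 + 2 * (2 * σ ^ 2 / e) ^ 2
        * Set.indicator (Iset lam e) (fun _ => (1 : ℝ)) y) ∂ν
      = 8 * lam ^ 2 + 2 * (2 * σ ^ 2 / e) ^ 2 * (ν (Iset lam e)).toReal := by
    rw [integral_add (integrable_const _)
      (((integrable_const (1 : ℝ)).indicator (measurableSet_Iset lam e)).const_mul _),
      integral_const, integral_const_mul,
      integral_indicator_const _ (measurableSet_Iset lam e)]
    simp [measure_univ, measureReal_def]
  have hIle : (ν (Iset lam e)).toReal ≤ 2 * (e * σ⁻¹) := by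
    rw [hν, gauss_Iset_eq hσ hlam he helam m]
    have h1 := gauss_Ioc_le hσ m (-lam) he.le
    have h2 := gauss_Ioc_le hσ m lam he.le
    linarith
  have harith : 2 * (2 * σ ^ 2 / e) ^ 2 * (2 * (e * σ⁻¹)) = 16 * σ ^ 3 / e := by
    field_simp
    ring
  calc ∫ y, (Gfun lam σ e y) ^ 2 ∂ν
      ≤ 8 * lam ^ 2 + 2 * (2 * σ ^ 2 / e) ^ 2 * (ν (Iset lam e)).toReal := by
        rw [← hR]; exact hmono
    _ ≤ 8 * lam ^ 2 + 2 * (2 * σ ^ 2 / e) ^ 2 * (2 * (e * σ⁻¹)) := by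
        have := mul_le_mul_of_nonneg_left hIle (by positivity : (0:ℝ) ≤ 2 * (2 * σ ^ 2 / e) ^ 2)
        linarith
    _ = 8 * lam ^ 2 + 16 * σ ^ 3 / e := by rw [harith]

lemma pi_eval_preimage {n : ℕ} (ν : Fin n → Measure ℝ) [∀ i, IsProbabilityMeasure (ν i)]
    (i : Fin n) {s : Set ℝ} (hs : MeasurableSet s) :
    Measure.pi ν ((fun y : Fin n → ℝ => y i) ⁻¹' s) = ν i s := by
  classical
  have hset : (fun y : Fin n → ℝ => y i) ⁻¹' s
      = Set.pi Set.univ (fun k => if k = i then s else Set.univ) := by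
    ext y
    simp only [Set.mem_preimage, Set.mem_pi, Set.mem_univ, forall_true_left]
    constructor
    · intro h k
      by_cases hk : k = i
      · subst hk; rw [if_pos rfl]; exact h
      · rw [if_neg hk]; trivial
    · intro h
      have := h i
      rwa [if_pos rfl] at this
  rw [hset, Measure.pi_pi]
  rw [Finset.prod_eq_single i (fun b _ hb => by rw [if_neg hb]; exact measure_univ)
    (fun h => absurd (Finset.mem_univ i) h)]
  rw [if_pos rfl]

lemma pi_map_eval {n : ℕ} (ν : Fin n → Measure ℝ) [∀ i, IsProbabilityMeasure (ν i)] (i : Fin n) :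
    (Measure.pi ν).map (fun y : Fin n → ℝ => y i) = ν i := by
  ext s hs
  rw [Measure.map_apply (measurable_pi_apply i) hs, pi_eval_preimage ν i hs]

lemma pi_eval_indepFun {n : ℕ} (ν : Fin n → Measure ℝ) [∀ i, IsProbabilityMeasure (ν i)]
    {i j : Fin n} (hij : i ≠ j) :
    IndepFun (fun y : Fin n → ℝ => y i) (fun y : Fin n → ℝ => y j) (Measure.pi ν) := by
  classical
  rw [indepFun_iff_measure_inter_preimage_eq_mul]
  intro s t hs ht
  rw [pi_eval_preimage ν i hs, pi_eval_preimage ν j ht]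
  have hset : (fun y : Fin n → ℝ => y i) ⁻¹' s ∩ (fun y : Fin n → ℝ => y j) ⁻¹' t
      = Set.pi Set.univ (fun k => if k = i then s else if k = j then t else Set.univ) := by
    ext y
    simp only [Set.mem_inter_iff, Set.mem_preimage, Set.mem_pi, Set.mem_univ, forall_true_left]
    constructor
    · rintro ⟨h1, h2⟩ k
      by_cases hk : k = i
      · subst hk; rw [if_pos rfl]; exact h1
      · rw [if_neg hk]
        by_cases hk2 : k = j
        · subst hk2; rw [if_pos rfl]; exact h2
        · rw [if_neg hk2]; trivial
    · intro h
      refine ⟨?_, ?_⟩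
      · have := h i; rwa [if_pos rfl] at this
      · have := h j
        rwa [if_neg (Ne.symm hij), if_pos rfl] at this
  rw [hset, Measure.pi_pi]
  rw [← Finset.prod_subset (Finset.subset_univ ({i, j} : Finset (Fin n)))
      (fun k _ hk => by
        simp only [Finset.mem_insert, Finset.mem_singleton, not_or] at hk
        rw [if_neg hk.1, if_neg hk.2]; exact measure_univ)]
  rw [Finset.prod_pair hij, if_pos rfl, if_neg (Ne.symm hij), if_pos rfl]


set_option maxHeartbeats 2000000 in
/-- **Consistency of SUGAR for soft-thresholding** (Theorem 2).  With
`Y^{(P)} ~ ⊗_i N((μ0^{(P)})_i, σ²)`, a finite-difference step `ε(P) → 0` with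
`P ε(P) → ∞`, the SUGAR estimator
`SUGAR_P(y) = 2 Σ_i h(y_i)(ST(y_i,λ) - y_i) + (2σ²/ε(P)) Σ_i (h(y_i + ε(P)) - h(y_i))`
and the risk derivative
`R'_P = 2λ Σ_i P(|Y_i| > λ) - σ√(2/π) Σ_i [exp(-((μ0)_i+λ)²/(2σ²)) + exp(-((μ0)_i-λ)²/(2σ²))]`
satisfy, for every `η > 0`,
`P(|(1/P)(SUGAR_P(Y^{(P)}) - R'_P)| ≥ η) → 0` as `P → ∞`. -/
theorem sugar_consistency_soft_thresholding
    (lam σ : ℝ) (hlam : 0 < lam) (hσ : 0 < σ)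
    (μ0 : (n : ℕ) → Fin n → ℝ)
    (ε : ℕ → ℝ) (hεpos : ∀ n, 0 < ε n)
    (hε0 : Tendsto ε atTop (𝓝 0))
    (hPε : Tendsto (fun n : ℕ => (n : ℝ) * ε n) atTop atTop)
    (η : ℝ) (hη : 0 < η) :
    Tendsto (fun n : ℕ =>
        (Measure.pi fun i : Fin n => gaussianReal (μ0 n i) ⟨σ ^ 2, sq_nonneg σ⟩)
          {y : Fin n → ℝ | η ≤
            |(1 / (n : ℝ)) *
              ((2 * ∑ i : Fin n, hST lam (y i) * (softThresh (y i) lam - y i)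
                  + (2 * σ ^ 2 / ε n) * ∑ i : Fin n, (hST lam (y i + ε n) - hST lam (y i)))
                - (2 * lam * ∑ i : Fin n,
                      ((gaussianReal (μ0 n i) ⟨σ ^ 2, sq_nonneg σ⟩) {t : ℝ | lam < |t|}).toReal
                    - σ * Real.sqrt (2 / Real.pi) * ∑ i : Fin n,
                        (Real.exp (-(μ0 n i + lam) ^ 2 / (2 * σ ^ 2))
                          + Real.exp (-(μ0 n i - lam) ^ 2 / (2 * σ ^ 2)))))|})
      atTop (𝓝 0) := by
  classical
  set bnd : ℕ → ℝ := fun n =>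
    32 * lam ^ 2 / η ^ 2 * ((n : ℝ))⁻¹ + 64 * σ ^ 3 / η ^ 2 * ((n : ℝ) * ε n)⁻¹ with hbnd
  have hbnd0 : Tendsto bnd atTop (𝓝 0) := by
    have h1 : Tendsto (fun n : ℕ => ((n : ℝ))⁻¹) atTop (𝓝 0) :=
      tendsto_inv_atTop_zero.comp tendsto_natCast_atTop_atTop
    have h2 : Tendsto (fun n : ℕ => ((n : ℝ) * ε n)⁻¹) atTop (𝓝 0) :=
      tendsto_inv_atTop_zero.comp hPε
    have h3 := (h1.const_mul (32 * lam ^ 2 / η ^ 2)).add (h2.const_mul (64 * σ ^ 3 / η ^ 2))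
    rw [show (32 * lam ^ 2 / η ^ 2 * 0 + 64 * σ ^ 3 / η ^ 2 * 0 : ℝ) = 0 by ring] at h3
    exact h3
  refine tendsto_of_tendsto_of_tendsto_of_le_of_le' tendsto_const_nhds
    (by rw [show (0 : ENNReal) = ENNReal.ofReal 0 by simp]
        exact ENNReal.tendsto_ofReal hbnd0)
    (Eventually.of_forall (fun n => zero_le)) ?_
  have hev1 : ∀ᶠ n : ℕ in atTop, ε n < lam := hε0.eventually_lt_const hlam
  have hev2 : ∀ᶠ n : ℕ in atTop, ε n < η / 8 := hε0.eventually_lt_const (by positivity)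
  have hev3 : ∀ᶠ n : ℕ in atTop, 1 ≤ n := eventually_ge_atTop 1
  filter_upwards [hev1, hev2, hev3] with n hεlam hεη hn1
  -- notation
  set e : ℝ := ε n with he_def
  have hepos : 0 < e := hεpos n
  set ν : Fin n → Measure ℝ := fun i => gaussianReal (μ0 n i) ⟨σ ^ 2, sq_nonneg σ⟩ with hν
  set π' : Measure (Fin n → ℝ) := Measure.pi ν with hπ'
  set X : Fin n → (Fin n → ℝ) → ℝ := fun i y => Gfun lam σ e (y i) with hX
  set S : (Fin n → ℝ) → ℝ := ∑ i : Fin n, X i with hS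
  set R : ℝ := ∑ i : Fin n, rFun lam σ (μ0 n i) with hR
  have hn0 : (0 : ℝ) < n := by exact_mod_cast Nat.lt_of_lt_of_le Nat.zero_lt_one hn1
  have hGmeas : Measurable (Gfun lam σ e) := measurable_Gfun hlam hepos hεlam
  have hSapp : ∀ y, S y = ∑ i : Fin n, Gfun lam σ e (y i) := by
    intro y; rw [hS, Finset.sum_apply]
  -- the set in question equals a set about S and R
  have hseteq : {y : Fin n → ℝ | η ≤
      |(1 / (n : ℝ)) *
        ((2 * ∑ i : Fin n, hST lam (y i) * (softThresh (y i) lam - y i)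
            + (2 * σ ^ 2 / ε n) * ∑ i : Fin n, (hST lam (y i + ε n) - hST lam (y i)))
          - (2 * lam * ∑ i : Fin n,
                ((gaussianReal (μ0 n i) ⟨σ ^ 2, sq_nonneg σ⟩) {t : ℝ | lam < |t|}).toReal
              - σ * Real.sqrt (2 / Real.pi) * ∑ i : Fin n,
                  (Real.exp (-(μ0 n i + lam) ^ 2 / (2 * σ ^ 2))
                    + Real.exp (-(μ0 n i - lam) ^ 2 / (2 * σ ^ 2)))))|}
      = {y : Fin n → ℝ | η ≤ |(1 / (n : ℝ)) * (S y - R)|} := by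
    ext y
    simp only [Set.mem_setOf_eq]
    have hSy : S y = 2 * ∑ i : Fin n, hST lam (y i) * (softThresh (y i) lam - y i)
        + (2 * σ ^ 2 / ε n) * ∑ i : Fin n, (hST lam (y i + ε n) - hST lam (y i)) := by
      rw [hSapp, Finset.mul_sum, Finset.mul_sum, ← Finset.sum_add_distrib]
      exact Finset.sum_congr rfl (fun i _ => by rw [Gfun]; ring)
    have hRy : R = 2 * lam * ∑ i : Fin n,
          ((gaussianReal (μ0 n i) ⟨σ ^ 2, sq_nonneg σ⟩) {t : ℝ | lam < |t|}).toReal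
        - σ * Real.sqrt (2 / Real.pi) * ∑ i : Fin n,
            (Real.exp (-(μ0 n i + lam) ^ 2 / (2 * σ ^ 2))
              + Real.exp (-(μ0 n i - lam) ^ 2 / (2 * σ ^ 2))) := by
      rw [hR, Finset.mul_sum, Finset.mul_sum, ← Finset.sum_sub_distrib]
      exact Finset.sum_congr rfl (fun i _ => by rw [rFun])
    rw [hSy, hRy]
  rw [hseteq]
  -- L² and measurability facts
  have hXmeas : ∀ i, Measurable (X i) := fun i => hGmeas.comp (measurable_pi_apply i)
  have hXL2 : ∀ i, MemLp (X i) 2 π' := by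
    intro i
    refine MemLp.of_bound (hXmeas i).aestronglyMeasurable (2 * lam + 2 * σ ^ 2 / e)
      (ae_of_all _ (fun y => ?_))
    rw [Real.norm_eq_abs]
    exact abs_Gfun_le hσ hlam hepos hεlam (y i)
  have hSL2 : MemLp S 2 π' := by
    rw [hS]; exact memLp_finset_sum' _ (fun i _ => hXL2 i)
  -- expectation of each coordinate
  have hXint : ∀ i, ∫ y, X i y ∂π' = ∫ t, Gfun lam σ e t ∂(ν i) := by
    intro i
    have h := integral_map (μ := Measure.pi ν) (φ := fun y : Fin n → ℝ => y i)
      (f := fun t : ℝ => Gfun lam σ e t)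
      (measurable_pi_apply i).aemeasurable
      (by rw [pi_map_eval ν i]; exact hGmeas.aestronglyMeasurable)
    rw [pi_map_eval ν i] at h
    exact h.symm
  -- bias bound
  have hES : ∫ y, S y ∂π' = ∑ i : Fin n, ∫ t, Gfun lam σ e t ∂(ν i) := by
    have : ∫ y, S y ∂π' = ∑ i : Fin n, ∫ y, X i y ∂π' := by
      rw [hS]
      rw [show (∫ y, (∑ i : Fin n, X i) y ∂π') = ∫ y, ∑ i : Fin n, X i y ∂π' by
        congr 1; ext y; rw [Finset.sum_apply]]
      exact integral_finset_sum _ (fun i _ => (hXL2 i).integrable one_le_two)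
    rw [this]
    exact Finset.sum_congr rfl (fun i _ => hXint i)
  have hbias : |(∫ y, S y ∂π') - R| ≤ (n : ℝ) * (4 * e) := by
    rw [hES, hR, ← Finset.sum_sub_distrib]
    refine le_trans (Finset.abs_sum_le_sum_abs _ _) ?_
    have hcard := Finset.sum_le_card_nsmul Finset.univ
      (fun i => |(∫ t, Gfun lam σ e t ∂(ν i)) - rFun lam σ (μ0 n i)|) (4 * e)
      (fun i _ => bias_bound hσ hlam hepos hεlam (μ0 n i))
    rw [Finset.card_univ, Fintype.card_fin, nsmul_eq_mul] at hcard
    exact hcard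
  -- variance bound
  have hvar : variance S π' ≤ (n : ℝ) * (8 * lam ^ 2 + 16 * σ ^ 3 / e) := by
    have hvs : variance S π' = ∑ i : Fin n, variance (X i) π' := by
      rw [hS]
      exact IndepFun.variance_sum (fun i _ => hXL2 i)
        (fun i _ j _ hij => (pi_eval_indepFun ν hij).comp hGmeas hGmeas)
    rw [hvs]
    have hone : ∀ i : Fin n, variance (X i) π' ≤ 8 * lam ^ 2 + 16 * σ ^ 3 / e := by
      intro i
      refine le_trans (variance_le_expectation_sq (hXmeas i).aestronglyMeasurable) ?_
      have hsq : ∫ y : Fin n → ℝ, (Gfun lam σ e (y i)) ^ 2 ∂π'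
          = ∫ t, (Gfun lam σ e t) ^ 2 ∂(ν i) := by
        have h := integral_map (μ := Measure.pi ν) (φ := fun y : Fin n → ℝ => y i)
          (f := fun t : ℝ => (Gfun lam σ e t) ^ 2)
          (measurable_pi_apply i).aemeasurable
          (by rw [pi_map_eval ν i]; exact (hGmeas.pow_const 2).aestronglyMeasurable)
        rw [pi_map_eval ν i] at h
        exact h.symm
      rw [show (π'[(X i) ^ 2]) = ∫ y : Fin n → ℝ, (Gfun lam σ e (y i)) ^ 2 ∂π' from rfl, hsq]
      exact sq_integral_Gfun_le hσ hlam hepos hεlam (μ0 n i)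
    have hcard := Finset.sum_le_card_nsmul Finset.univ
      (fun i => variance (X i) π') (8 * lam ^ 2 + 16 * σ ^ 3 / e) (fun i _ => hone i)
    rw [Finset.card_univ, Fintype.card_fin, nsmul_eq_mul] at hcard
    exact hcard
  -- inclusion into the Chebyshev event
  have hincl : {y : Fin n → ℝ | η ≤ |(1 / (n : ℝ)) * (S y - R)|}
      ⊆ {y : Fin n → ℝ | (n : ℝ) * η / 2 ≤ |S y - π'[S]|} := by
    intro y hy
    simp only [Set.mem_setOf_eq] at hy ⊢
    have h1 : (n : ℝ) * η ≤ |S y - R| := by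
      rw [abs_mul, abs_of_pos (by positivity : (0:ℝ) < 1 / (n:ℝ))] at hy
      calc (n : ℝ) * η ≤ (n : ℝ) * (1 / (n : ℝ) * |S y - R|) :=
            mul_le_mul_of_nonneg_left hy hn0.le
        _ = |S y - R| := by field_simp
    have h2 : |S y - R| ≤ |S y - π'[S]| + |(π'[S]) - R| := by
      calc |S y - R| = |(S y - π'[S]) + ((π'[S]) - R)| := by ring_nf
        _ ≤ _ := abs_add_le _ _
    have h3 : |(π'[S]) - R| ≤ (n : ℝ) * (η / 2) := by
      refine le_trans hbias ?_
      have : 4 * e ≤ η / 2 := by linarith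
      exact mul_le_mul_of_nonneg_left this hn0.le
    have h4 : (n : ℝ) * η ≤ |S y - π'[S]| + (n : ℝ) * (η / 2) := by
      calc (n : ℝ) * η ≤ |S y - R| := h1
        _ ≤ |S y - π'[S]| + |(π'[S]) - R| := h2
        _ ≤ |S y - π'[S]| + (n : ℝ) * (η / 2) := by linarith
    linarith
  -- Chebyshev
  have hcheb := meas_ge_le_variance_div_sq (μ := π') hSL2
    (show 0 < (n : ℝ) * η / 2 by positivity)
  have hfinal : π' {y : Fin n → ℝ | η ≤ |(1 / (n : ℝ)) * (S y - R)|}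
      ≤ ENNReal.ofReal (bnd n) := by
    refine le_trans (measure_mono hincl) (le_trans hcheb ?_)
    apply ENNReal.ofReal_le_ofReal
    have hc2 : (0:ℝ) < ((n : ℝ) * η / 2) ^ 2 := by positivity
    have hdiv : variance S π' / ((n : ℝ) * η / 2) ^ 2
        ≤ ((n : ℝ) * (8 * lam ^ 2 + 16 * σ ^ 3 / e)) / ((n : ℝ) * η / 2) ^ 2 := by
      gcongr
    refine le_trans hdiv (le_of_eq ?_)
    rw [hbnd]
    simp only [← he_def]
    field_simp
    ring
  exact hfinal

end
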